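/- Let G be a graph in standard Cohen–Macaulay very well-covered form on {x_1,…,x_n,y_1,…,y_n}. Then the cover ideal I(G)^∨ ⊂ S = K[x_1,…,x_n,y_1,…,y_n] has linear quotients with respect to the order of its minimal monomial generators given by decreasing lexicographic order induced by x_n > y_n > x_{n−1} > y_{n−1} > ⋯ > x_1 > y_1; that is, listing G(I(G)^∨) = {u_1 >_lex u_2 >_lex ⋯ >_lex u_m} in this order, each colon ideal (u_1,…,u_{ℓ−1}) : u_ℓ (2 ≤ ℓ ≤ m) is generated by a subset of the variables. (This is the case k = 0 of the paper's Theorem 4.1.) -/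

import Mathlib

/-- `C` is a vertex cover of the graph `G`. -/
def IsVertexCover {V : Type*} (G : SimpleGraph V) (C : Finset V) : Prop :=
  ∀ ⦃v w : V⦄, G.Adj v w → v ∈ C ∨ w ∈ C

/-- `C` is a minimal vertex cover of the graph `G`. -/
def IsMinVertexCover {V : Type*} (G : SimpleGraph V) (C : Finset V) : Prop :=
  IsVertexCover G C ∧ ∀ D ⊆ C, IsVertexCover G D → D = C

/-- `C` is an independent set of the graph `G`. -/
def IsIndepSet {V : Type*} (G : SimpleGraph V) (C : Finset V) : Prop :=
  ∀ ⦃v w : V⦄, v ∈ C → w ∈ C → ¬ G.Adj v w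

/-- `C` is a maximal independent set of the graph `G`. -/
def IsMaxIndepSet {V : Type*} (G : SimpleGraph V) (C : Finset V) : Prop :=
  IsIndepSet G C ∧ ∀ D, C ⊆ D → IsIndepSet G D → D = C

/-- A graph on the vertex set `{x_i, y_i : i ∈ ι}` (with `x_i = Sum.inl i` and
`y_i = Sum.inr i`) is in standard Cohen–Macaulay very well-covered form if it satisfies
conditions (i)–(v) of the Crupi–Rinaldo–Terai characterization. -/
def StdCMVWC {ι : Type*} [LinearOrder ι] [Fintype ι] (G : SimpleGraph (ι ⊕ ι)) : Prop :=
  IsMinVertexCover G (Finset.univ.image Sum.inl) ∧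
  IsMaxIndepSet G (Finset.univ.image Sum.inr) ∧
  (∀ i : ι, G.Adj (Sum.inl i) (Sum.inr i)) ∧
  (∀ i j : ι, G.Adj (Sum.inl i) (Sum.inr j) → i ≤ j) ∧
  (∀ i j : ι, G.Adj (Sum.inl i) (Sum.inr j) → ¬ G.Adj (Sum.inl i) (Sum.inl j)) ∧
  (∀ (i j k : ι) (z : ι ⊕ ι), (z = Sum.inl i ∨ z = Sum.inr i) →
    i ≠ j → j ≠ k → i ≠ k →
    G.Adj z (Sum.inl j) → G.Adj (Sum.inr j) (Sum.inl k) → G.Adj z (Sum.inl k))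


open MvPolynomial


/-- The variable order `x_n > y_n > x_{n-1} > y_{n-1} > ⋯ > x_1 > y_1`:
`v < w` iff the index of `v` is smaller than that of `w`, or `v = y_i` and `w = x_i`. -/
def varLt {m : ℕ} (v w : Fin m ⊕ Fin m) : Prop :=
  Sum.elim id id v < Sum.elim id id w ∨ ∃ i, v = Sum.inr i ∧ w = Sum.inl i

/-- `C >_lex D` for the squarefree monomials `∏_{v∈C} v` and `∏_{v∈D} v`, in the
lexicographic order induced by `x_n > y_n > ⋯ > x_1 > y_1`: at the greatest variable
where the two monomials differ, the one of `C` occurs. -/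
def CoverLexGT {m : ℕ} (C D : Finset (Fin m ⊕ Fin m)) : Prop :=
  ∃ v, v ∈ C ∧ v ∉ D ∧ ∀ w, varLt v w → (w ∈ C ↔ w ∈ D)

section Comb
variable {ι : Type*} [LinearOrder ι] [Fintype ι] {G : SimpleGraph (ι ⊕ ι)}
  (hG : StdCMVWC G)
include hG

lemma noYY (i j : ι) : ¬ G.Adj (Sum.inr i) (Sum.inr j) :=
  hG.2.1.1 (Finset.mem_image_of_mem _ (Finset.mem_univ i))
    (Finset.mem_image_of_mem _ (Finset.mem_univ j))

omit hG in
lemma dom {C : Finset (ι ⊕ ι)} (hC : IsMinVertexCover G C) {v} (hv : v ∈ C) :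
    ∃ w, G.Adj v w ∧ w ∉ C := by
  by_contra h
  push_neg at h
  have hcov : IsVertexCover G (C.erase v) := by
    intro a b hab
    rcases hC.1 hab with ha | hb
    · by_cases hav : a = v
      · subst hav
        exact Or.inr (Finset.mem_erase.2 ⟨fun hbv => G.irrefl (hbv ▸ hab), h b hab⟩)
      · exact Or.inl (Finset.mem_erase.2 ⟨hav, ha⟩)
    · by_cases hbv : b = v
      · subst hbv
        exact Or.inl (Finset.mem_erase.2 ⟨fun hav => G.irrefl (hav ▸ hab), h a hab.symm⟩)
      · exact Or.inr (Finset.mem_erase.2 ⟨hbv, hb⟩)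
  have := hC.2 _ (Finset.erase_subset v C) hcov
  exact (Finset.notMem_erase v C) (this.symm ▸ hv)

lemma pair_mem {C : Finset (ι ⊕ ι)} (hC : IsMinVertexCover G C) (i : ι) :
    Sum.inl i ∈ C ↔ Sum.inr i ∉ C := by
  constructor
  · intro hx hy
    obtain ⟨w, hw, hwC⟩ := dom hC hy
    obtain ⟨j, rfl⟩ : ∃ j, w = Sum.inl j := by
      cases w with
      | inl j => exact ⟨j, rfl⟩
      | inr j => exact absurd hw (noYY hG i j)
    have hji : j ≤ i := hG.2.2.2.1 j i hw.symm
    have hjne : j ≠ i := fun h => hwC (h ▸ hx)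
    obtain ⟨z, hz, hzC⟩ := dom hC hx
    have hout : ∀ a b, a ∉ C → b ∉ C → ¬ G.Adj a b := fun a b ha hb hab =>
      (hC.1 hab).elim ha hb
    cases z with
    | inr k =>
      have hik : i ≤ k := hG.2.2.2.1 i k hz
      have hkne : k ≠ i := fun h => hzC (h ▸ hy)
      have hkj : k ≠ j := fun h => hjne (le_antisymm hji (h ▸ hik))
      have : G.Adj (Sum.inr k) (Sum.inl j) :=
        hG.2.2.2.2.2 k i j (Sum.inr k) (Or.inr rfl) hkne (fun h => hjne h.symm) hkj hz.symm hw
      exact hout _ _ hzC hwC this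
    | inl k =>
      have hkne : k ≠ i := fun h => hzC (h ▸ hx)
      by_cases hkj : k = j
      · subst hkj
        exact hG.2.2.2.2.1 k i hw.symm hz.symm
      · have : G.Adj (Sum.inl k) (Sum.inl j) :=
          hG.2.2.2.2.2 k i j (Sum.inl k) (Or.inl rfl) hkne (fun h => hjne h.symm) hkj hz.symm hw
        exact hout _ _ hzC hwC this
  · intro hy
    exact (hC.1 (hG.2.2.1 i)).resolve_right hy

lemma minCover_of {C : Finset (ι ⊕ ι)} (hcov : IsVertexCover G C)
    (hpair : ∀ i, (Sum.inl i ∈ C ↔ Sum.inr i ∉ C)) : IsMinVertexCover G C := by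
  refine ⟨hcov, fun D hD hDcov => Finset.Subset.antisymm hD fun v hv => ?_⟩
  cases v with
  | inl i =>
    have : Sum.inr i ∉ D := fun h => (hpair i).1 hv (hD h)
    exact (hDcov (hG.2.2.1 i)).resolve_right this
  | inr i =>
    have : Sum.inl i ∉ D := fun h => (hpair i).1 (hD h) hv
    exact (hDcov (hG.2.2.1 i)).resolve_left this


omit [Fintype ι] hG in
lemma pair_mem' {C : Finset (ι ⊕ ι)} (hpair : ∀ i, (Sum.inl i ∈ C ↔ Sum.inr i ∉ C)) (i : ι) :
    Sum.inr i ∈ C ↔ Sum.inl i ∉ C := by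
  rw [hpair i]; tauto

end Comb

lemma key {N : ℕ} {G : SimpleGraph (Fin N ⊕ Fin N)} (hG : StdCMVWC G)
    {C D : Finset (Fin N ⊕ Fin N)} (hC : IsMinVertexCover G C) (hD : IsMinVertexCover G D)
    (hlex : CoverLexGT D C) :
    ∃ j, Sum.inl j ∈ D ∧ Sum.inl j ∉ C ∧
      IsMinVertexCover G (insert (Sum.inl j) (C.erase (Sum.inr j))) ∧
      CoverLexGT (insert (Sum.inl j) (C.erase (Sum.inr j))) C := by
  classical
  obtain ⟨v, hvD, hvC, hag⟩ := hlex
  have hex : ∃ i, Sum.inl i ∈ D ∧ Sum.inl i ∉ C := by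
    cases v with
    | inl i => exact ⟨i, hvD, hvC⟩
    | inr i =>
      exfalso
      have hlt : varLt (Sum.inr i) (Sum.inl i) := Or.inr ⟨i, rfl, rfl⟩
      have h1 : Sum.inl i ∈ D ↔ Sum.inl i ∈ C := hag _ hlt
      have h2 : Sum.inl i ∉ D := fun h => ((pair_mem hG hD i).1 h) hvD
      have h3 : Sum.inl i ∉ C := fun h => h2 (h1.2 h)
      exact hvC ((pair_mem' (pair_mem hG hC) i).2 h3)
  set A : Finset (Fin N) := Finset.univ.filter (fun j => Sum.inl j ∈ D ∧ Sum.inl j ∉ C) with hA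
  have hAne : A.Nonempty := by
    obtain ⟨i, h1, h2⟩ := hex
    exact ⟨i, Finset.mem_filter.2 ⟨Finset.mem_univ _, h1, h2⟩⟩
  set j := A.min' hAne with hj
  obtain ⟨-, hjD, hjC⟩ := Finset.mem_filter.1 (A.min'_mem hAne)
  have hmin : ∀ l, Sum.inl l ∈ D → Sum.inl l ∉ C → j ≤ l := fun l h1 h2 =>
    A.min'_le l (Finset.mem_filter.2 ⟨Finset.mem_univ _, h1, h2⟩)
  have hyjC : Sum.inr j ∈ C := (pair_mem' (pair_mem hG hC) j).2 hjC
  set E : Finset (Fin N ⊕ Fin N) := insert (Sum.inl j) (C.erase (Sum.inr j)) with hE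
  have hjE : Sum.inl j ∈ E := Finset.mem_insert_self _ _
  have hmemE : ∀ w, w ≠ Sum.inl j → w ≠ Sum.inr j → (w ∈ E ↔ w ∈ C) := by
    intro w h1 h2
    simp [hE, Finset.mem_insert, Finset.mem_erase, h1, h2]
  have hcov : IsVertexCover G E := by
    have claim : ∀ a b, G.Adj a b → a ∈ C → a ∈ E ∨ b ∈ E := by
      intro a b hab haC
      by_cases h1 : a = Sum.inr j
      · subst h1
        cases b with
        | inr m => exact absurd hab (noYY hG j m)
        | inl l =>
          by_cases hlj : l = j
          · subst hlj; exact Or.inr hjE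
          · have hlje : l ≤ j := hG.2.2.2.1 l j hab.symm
            have hinlD : Sum.inl l ∈ D := by
              have : Sum.inr j ∉ D := (pair_mem hG hD j).1 hjD
              exact (hD.1 hab).resolve_left this
            by_cases hlC : Sum.inl l ∈ C
            · exact Or.inr ((hmemE _ (by simp [hlj]) (by simp)).2 hlC)
            · exact absurd (le_antisymm hlje (hmin l hinlD hlC)) hlj
      · refine Or.inl ?_
        by_cases h2 : a = Sum.inl j
        · exact h2 ▸ hjE
        · exact (hmemE a h2 h1).2 haC
    intro a b hab
    rcases hC.1 hab with ha | hb
    · exact claim a b hab ha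
    · exact (claim b a hab.symm hb).symm
  have hpairE : ∀ i, (Sum.inl i ∈ E ↔ Sum.inr i ∉ E) := by
    intro i
    by_cases hij : i = j
    · subst hij
      simp [hE, Finset.mem_insert, Finset.mem_erase]
    · rw [hmemE (Sum.inl i) (by simp [hij]) (by simp),
        show (Sum.inr i ∈ E ↔ Sum.inr i ∈ C) from hmemE _ (by simp) (by simp [hij])]
      exact pair_mem hG hC i
  refine ⟨j, hjD, hjC, minCover_of hG hcov hpairE, ⟨Sum.inl j, hjE, hjC, ?_⟩⟩
  intro w hw
  rcases hw with hlt | ⟨i, hi, -⟩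
  · have hwj1 : w ≠ Sum.inl j := by rintro rfl; exact lt_irrefl _ hlt
    have hwj2 : w ≠ Sum.inr j := by rintro rfl; exact lt_irrefl _ hlt
    exact hmemE w hwj1 hwj2
  · exact absurd hi (by simp)




lemma colon_span_singleton {R : Type*} [CommRing R] (I : Ideal R) (u f : R) :
    f ∈ Submodule.colon I ((Ideal.span {u} : Ideal R) : Set R) ↔ f * u ∈ I := by
  rw [Submodule.mem_colon]
  constructor
  · intro h
    simpa [smul_eq_mul] using h u (Ideal.mem_span_singleton_self u)
  · intro h p hp
    obtain ⟨a, rfl⟩ := Ideal.mem_span_singleton'.mp hp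
    rw [smul_eq_mul, show f * (a * u) = a * (f * u) by ring]
    exact Ideal.mul_mem_left _ a h

noncomputable def indF {V : Type*} [DecidableEq V] (C : Finset V) : V →₀ ℕ :=
  ∑ v ∈ C, Finsupp.single v 1

lemma indF_apply {V : Type*} [DecidableEq V] (C : Finset V) (w : V) :
    indF C w = if w ∈ C then 1 else 0 := by
  classical
  rw [indF, Finsupp.finset_sum_apply]
  simp [Finsupp.single_apply]

lemma prodX_eq {V : Type*} [DecidableEq V] {K : Type*} [CommSemiring K] (C : Finset V) :
    ∏ v ∈ C, (X v : MvPolynomial V K) = monomial (indF C) 1 := by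
  classical
  induction C using Finset.induction_on with
  | empty => simp [indF]
  | @insert a s ha ih =>
    have h : indF (insert a s) = Finsupp.single a 1 + indF s := by
      rw [indF, indF, Finset.sum_insert ha]
    rw [Finset.prod_insert ha, ih, h, ← pow_one (X a), X_pow_eq_monomial, monomial_mul, one_mul]

/-- The cover ideal of a graph in standard CM very well-covered form has linear quotients
with respect to the decreasing lexicographic order on its minimal monomial generators
induced by `x_n > y_n > x_{n-1} > y_{n-1} > ⋯ > x_1 > y_1`: for each minimal vertex
cover `C`, the colon ideal of the span of the lex-earlier generators by `∏_{v∈C} v` is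
generated by a subset of the variables. -/
theorem stmt8 (n : ℕ) (K : Type*) [Field K]
    (G : SimpleGraph (Fin (n + 1) ⊕ Fin (n + 1))) (hG : StdCMVWC G) :
    ∀ C : Finset (Fin (n + 1) ⊕ Fin (n + 1)), IsMinVertexCover G C →
      ∃ T : Set (Fin (n + 1) ⊕ Fin (n + 1)),
        Submodule.colon
          (Ideal.span {p : MvPolynomial (Fin (n + 1) ⊕ Fin (n + 1)) K |
            ∃ D, IsMinVertexCover G D ∧ CoverLexGT D C ∧ p = ∏ v ∈ D, X v})
          ((Ideal.span {∏ v ∈ C, X v} : Ideal (MvPolynomial (Fin (n + 1) ⊕ Fin (n + 1)) K)) :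
            Set (MvPolynomial (Fin (n + 1) ⊕ Fin (n + 1)) K))
        = Ideal.span ((fun v => (X v : MvPolynomial (Fin (n + 1) ⊕ Fin (n + 1)) K)) '' T) := by
  classical
  intro C hC
  set 𝒮 : Set ((Fin (n + 1) ⊕ Fin (n + 1)) →₀ ℕ) :=
    {s | ∃ D, IsMinVertexCover G D ∧ CoverLexGT D C ∧ s = indF D} with h𝒮
  have hsetEq : {p : MvPolynomial (Fin (n + 1) ⊕ Fin (n + 1)) K |
      ∃ D, IsMinVertexCover G D ∧ CoverLexGT D C ∧ p = ∏ v ∈ D, X v} =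
      (fun s => monomial s (1 : K)) '' 𝒮 := by
    ext p
    constructor
    · rintro ⟨D, h1, h2, rfl⟩
      exact ⟨indF D, ⟨D, h1, h2, rfl⟩, (prodX_eq D).symm⟩
    · rintro ⟨s, ⟨D, h1, h2, rfl⟩, rfl⟩
      exact ⟨D, h1, h2, (prodX_eq D).symm⟩
  set J : Ideal (MvPolynomial (Fin (n + 1) ⊕ Fin (n + 1)) K) :=
    Ideal.span {p : MvPolynomial (Fin (n + 1) ⊕ Fin (n + 1)) K |
      ∃ D, IsMinVertexCover G D ∧ CoverLexGT D C ∧ p = ∏ v ∈ D, X v} with hJ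
  refine ⟨{v | (X v : MvPolynomial (Fin (n + 1) ⊕ Fin (n + 1)) K) * ∏ w ∈ C, X w ∈ J}, ?_⟩
  apply le_antisymm
  · intro f hf
    rw [colon_span_singleton] at hf
    refine (mem_ideal_span_X_image
      (s := {v | (X v : MvPolynomial (Fin (n + 1) ⊕ Fin (n + 1)) K) * ∏ w ∈ C, X w ∈ J})).mpr ?_
    intro m hm
    have hsup : m + indF C ∈ (f * ∏ w ∈ C, X w).support := by
      rw [prodX_eq, mem_support_iff, coeff_mul_monomial]
      simpa using mem_support_iff.mp hm
    have hf' : f * ∏ w ∈ C, X w ∈ Ideal.span ((fun s => monomial s (1 : K)) '' 𝒮) := by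
      rw [← hsetEq]; exact hf
    obtain ⟨si, hsi, hle'⟩ := mem_ideal_span_monomial_image.mp hf' _ hsup
    obtain ⟨D, hD, hlex, rfl⟩ := hsi
    obtain ⟨j, hjD, hjC, hE, hElex⟩ := key hG hC hD hlex
    refine ⟨Sum.inl j, ?_, ?_⟩
    · show (X (Sum.inl j) : MvPolynomial (Fin (n + 1) ⊕ Fin (n + 1)) K) * ∏ w ∈ C, X w ∈ J
      rw [hJ, hsetEq, prodX_eq, ← pow_one (X (Sum.inl j)), X_pow_eq_monomial, monomial_mul,
        one_mul]
      refine mem_ideal_span_monomial_image.mpr ?_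
      intro xi hxi
      have hxieq : xi = Finsupp.single (Sum.inl j) 1 + indF C := by
        have := mem_support_iff.mp hxi
        rw [coeff_monomial] at this
        by_cases h : Finsupp.single (Sum.inl j) 1 + indF C = xi
        · exact h.symm
        · simp [h] at this
      subst hxieq
      refine ⟨indF (insert (Sum.inl j) (C.erase (Sum.inr j))),
        ⟨_, hE, hElex, rfl⟩, ?_⟩
      rw [Finsupp.le_def]
      intro w
      rw [indF_apply, Finsupp.add_apply, indF_apply]
      by_cases hw : w ∈ insert (Sum.inl j) (C.erase (Sum.inr j))
      · rcases Finset.mem_insert.mp hw with rfl | hw'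
        · simp [hw, Finsupp.single_apply]
        · have hwC : w ∈ C := (Finset.mem_erase.mp hw').2
          simp [hw, hwC]
      · simp [hw]
    · have h1 := Finsupp.le_def.mp hle' (Sum.inl j)
      rw [indF_apply, Finsupp.add_apply, indF_apply] at h1
      simp only [hjD, hjC, if_true, if_false, if_pos, if_neg] at h1
      omega
  · rw [Ideal.span_le]
    rintro p ⟨v, hv, rfl⟩
    rw [SetLike.mem_coe, colon_span_singleton]
    exact hv
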